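/- Let p be a prime, r ≥ 2, and let x₁, …, x_r be r distinct elements of 𝔽_p. Suppose ℳ is a nonempty finite subset of the algebraic closure of 𝔽_p with 4|ℳ| < p^(1/r). Then there exists an index j ∈ {1, …, r} such that the translate ℳ + x_j is not contained in the union over i ≠ j of the translates ℳ + x_i. -/

import Mathlib

/-- Lemma 2.2: translation lemma over the algebraic closure of `𝔽_p`. -/
theorem translate_not_covered (p r : ℕ) [Fact p.Prime] (hr : 2 ≤ r)
    (x : Fin r → ZMod p) (hx : Function.Injective x)
    (M : Finset (AlgebraicClosure (ZMod p))) (hM : M.Nonempty)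
    (hcard : (4 * M.card : ℝ) < (p : ℝ) ^ ((1 : ℝ) / r)) :
    ∃ j : Fin r,
      ¬ ((fun m => m + algebraMap (ZMod p) (AlgebraicClosure (ZMod p)) (x j)) '' (M : Set (AlgebraicClosure (ZMod p)))
        ⊆ ⋃ i ∈ {i : Fin r | i ≠ j},
            (fun m => m + algebraMap (ZMod p) (AlgebraicClosure (ZMod p)) (x i)) '' (M : Set (AlgebraicClosure (ZMod p)))) := by
  classical
  haveI : NeZero p := ⟨(Fact.out (p := p.Prime)).ne_zero⟩
  haveI : NeZero r := ⟨by omega⟩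
  by_contra hcon
  push_neg at hcon
  set φ := algebraMap (ZMod p) (AlgebraicClosure (ZMod p)) with hφ
  have hφinj : Function.Injective φ := (algebraMap (ZMod p) _).injective
  obtain ⟨m₀, hm₀⟩ := hM
  set S : Finset (ZMod p) := Finset.univ.filter (fun t => m₀ + φ t ∈ M) with hSdef
  have h0S : (0:ZMod p) ∈ S := by simp [hSdef, hm₀]
  have hScard : S.card ≤ M.card := by
    apply Finset.card_le_card_of_injOn (fun t => m₀ + φ t)
    · intro t ht
      simp only [hSdef, Finset.mem_coe, Finset.mem_filter] at ht
      exact ht.2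
    · intro a _ b _ h
      exact hφinj (by simpa using h)
  have hScov : ∀ (j : Fin r), ∀ t ∈ S, ∃ i, i ≠ j ∧ t + (x j - x i) ∈ S := by
    intro j t ht
    have hmem : m₀ + φ t ∈ M := by
      simp only [hSdef, Finset.mem_filter] at ht; exact ht.2
    have h2 := hcon j (Set.mem_image_of_mem _ (by exact_mod_cast hmem))
    simp only [Set.mem_iUnion, Set.mem_image, Set.mem_setOf_eq, exists_prop] at h2
    obtain ⟨i, hij, m', hm', heq⟩ := h2
    refine ⟨i, hij, ?_⟩
    simp only [hSdef, Finset.mem_filter, Finset.mem_univ, true_and]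
    have hm'' : m₀ + φ (t + (x j - x i)) = m' := by
      rw [map_add, map_sub]
      linear_combination -heq
    rw [hm'']
    exact_mod_cast hm'
  -- numeric setup
  set n := M.card with hn
  have hn1 : 1 ≤ n := Finset.card_pos.mpr ⟨m₀, hm₀⟩
  have hp1 : 0 < p := (Fact.out (p := p.Prime)).pos
  have hKr : (2*n+1) ^ r < p := by
    have hp0 : (0:ℝ) ≤ (p:ℝ) := Nat.cast_nonneg p
    have h1 : ((4*n:ℕ):ℝ) < (p:ℝ) ^ ((1:ℝ)/r) := by push_cast; exact_mod_cast hcard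
    have h2 : (((4*n:ℕ):ℝ))^r < ((p:ℝ) ^ ((1:ℝ)/r))^r :=
      pow_lt_pow_left₀ h1 (by positivity) (by omega)
    have h3 : ((p:ℝ) ^ ((1:ℝ)/r))^r = (p:ℝ) := by
      rw [← Real.rpow_natCast ((p:ℝ) ^ ((1:ℝ)/r)) r, ← Real.rpow_mul hp0,
        one_div_mul_cancel (by exact_mod_cast (by omega : r ≠ 0)), Real.rpow_one]
    have h4 : ((4*n)^r : ℕ) < p := by
      have : (((4*n)^r : ℕ) : ℝ) < (p:ℝ) := by rw [Nat.cast_pow]; rw [h3] at h2; exact h2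
      exact_mod_cast this
    exact lt_of_le_of_lt (Nat.pow_le_pow_left (by omega) r) h4
  set K := 2*n+1 with hK
  set Δ := p / K with hΔ
  set L := Δ + 1 with hL
  have hL0 : 0 < L := hL ▸ Nat.succ_pos Δ
  have hKL : p < K * L := by
    have h1 : p < (p/K+1)*K := (Nat.div_lt_iff_lt_mul (by omega : 0 < K)).mp (Nat.lt_succ_self _)
    calc p < (p/K+1)*K := h1
      _ = K*L := by rw [hL, hΔ]; ring
  -- pigeonhole
  have hvalK : ∀ (l : ZMod p) (i : Fin r), (l * (x i - x 0)).val / L < K := by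
    intro l i
    rw [Nat.div_lt_iff_lt_mul hL0]
    exact lt_trans (ZMod.val_lt _) hKL
  set f : ZMod p → (Fin r → Fin K) := fun l i => ⟨(l * (x i - x 0)).val / L, hvalK l i⟩ with hf
  have hcardlt : Fintype.card (Fin r → Fin K) < Fintype.card (ZMod p) := by
    rw [Fintype.card_fun, Fintype.card_fin, Fintype.card_fin, ZMod.card]
    exact hKr
  obtain ⟨l, m, hlm, hfeq⟩ := Fintype.exists_ne_map_eq_of_card_lt f hcardlt
  set lam := l - m with hlam
  have hlam0 : lam ≠ 0 := sub_ne_zero.mpr hlm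
  set z : Fin r → ℤ := fun i => ((l * (x i - x 0)).val : ℤ) - ((m * (x i - x 0)).val : ℤ) with hz
  have hzcast : ∀ i, ((z i : ZMod p)) = lam * (x i - x 0) := by
    intro i
    simp only [hz, hlam]
    push_cast [ZMod.natCast_val, ZMod.cast_id]
    ring
  have hzbound : ∀ i, -(Δ:ℤ) ≤ z i ∧ z i ≤ (Δ:ℤ) := by
    intro i
    have h := congrArg Fin.val (congrFun hfeq i)
    simp only [hf] at h
    set a := (l * (x i - x 0)).val with ha
    set b := (m * (x i - x 0)).val with hb
    have h6 : a < b + L := by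
      have h1 : a < (a/L + 1) * L := (Nat.div_lt_iff_lt_mul hL0).mp (Nat.lt_succ_self _)
      rw [h] at h1
      calc a < (b/L+1)*L := h1
        _ = (b/L)*L + L := by ring
        _ ≤ b + L := Nat.add_le_add_right (Nat.div_mul_le_self b L) L
    have h7 : b < a + L := by
      have h1 : b < (b/L + 1) * L := (Nat.div_lt_iff_lt_mul hL0).mp (Nat.lt_succ_self _)
      rw [← h] at h1
      calc b < (a/L+1)*L := h1
        _ = (a/L)*L + L := by ring
        _ ≤ a + L := Nat.add_le_add_right (Nat.div_mul_le_self a L) L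
    simp only [hz]
    omega
  obtain ⟨j, -, hj⟩ := Finset.exists_max_image Finset.univ z ⟨0, Finset.mem_univ 0⟩
  set T := S.image (fun s => lam * s) with hT
  have hTcard : T.card = S.card := Finset.card_image_of_injective _ (mul_right_injective₀ hlam0)
  have h0T : (0:ZMod p) ∈ T := Finset.mem_image.mpr ⟨0, h0S, mul_zero lam⟩
  have hstep : ∀ u ∈ T, ∃ d : ℤ, 1 ≤ d ∧ d ≤ 2*(Δ:ℤ) ∧ u + (d : ZMod p) ∈ T := by
    intro u hu
    obtain ⟨s, hs, rfl⟩ := Finset.mem_image.mp hu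
    obtain ⟨i, hij, hsi⟩ := hScov j s hs
    refine ⟨z j - z i, ?_, ?_, ?_⟩
    · have hle := hj i (Finset.mem_univ i)
      have hne : z i ≠ z j := by
        intro he
        apply hij
        have hc : (z i : ZMod p) = ((z j : ℤ) : ZMod p) := by rw [he]
        rw [hzcast, hzcast] at hc
        have hc2 := mul_left_cancel₀ hlam0 hc
        exact hx (by linear_combination hc2)
      omega
    · have h1 := (hzbound j).2
      have h2 := (hzbound i).1
      omega
    · have he : lam * s + ((z j - z i : ℤ) : ZMod p) = lam * (s + (x j - x i)) := by
        push_cast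
        rw [hzcast, hzcast]
        ring
      rw [he]
      exact Finset.mem_image_of_mem _ hsi
  -- main induction
  have hmain : ∀ k : ℕ, ∃ (c : ℤ) (F : Finset ℤ), F.card = k + 1 ∧ c ∈ F ∧
      (∀ a ∈ F, 0 ≤ a ∧ a ≤ c) ∧ c ≤ 2*(Δ:ℤ)*k ∧ ∀ a ∈ F, ((a : ℤ) : ZMod p) ∈ T := by
    intro k
    induction k with
    | zero =>
      refine ⟨0, {0}, by simp, by simp, by simp, by simp, ?_⟩
      intro a ha
      simp only [Finset.mem_singleton] at ha
      subst ha
      simpa using h0T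
    | succ k ih =>
      obtain ⟨c, F, hF1, hcF, hF2, hF3, hF4⟩ := ih
      obtain ⟨d, hd1, hd2, hd3⟩ := hstep ((c : ZMod p)) (hF4 c hcF)
      refine ⟨c + d, insert (c+d) F, ?_, Finset.mem_insert_self _ _, ?_, ?_, ?_⟩
      · rw [Finset.card_insert_of_notMem, hF1]
        intro hmem
        have := hF2 _ hmem
        omega
      · intro a ha
        rcases Finset.mem_insert.mp ha with h | h
        · subst h
          have := hF2 c hcF
          constructor <;> omega
        · have := hF2 a h
          constructor <;> omega
      · have : ((k:ℤ)+1) = ((k+1 : ℕ) : ℤ) := by push_cast; ring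
        push_cast
        linarith
      · intro a ha
        rcases Finset.mem_insert.mp ha with h | h
        · subst h
          push_cast
          exact hd3
        · exact hF4 a h
  obtain ⟨c, F, hF1, hcF, hF2, hF3, hF4⟩ := hmain S.card
  -- bound : 2*Δ*S.card < p
  have hbound : 2*Δ*S.card < p := by
    have hdm : Δ * K ≤ p := by rw [hΔ]; exact Nat.div_mul_le_self p K
    have e1 : 2*Δ*n + Δ = Δ*K := by rw [hK]; ring
    have e2 : 2*Δ*S.card ≤ 2*Δ*n := Nat.mul_le_mul_left _ (hScard)
    rcases Nat.eq_zero_or_pos Δ with h0 | h0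
    · rw [h0]; simpa using hp1
    · calc 2*Δ*S.card ≤ 2*Δ*n := e2
        _ < 2*Δ*n + Δ := Nat.lt_add_of_pos_right h0
        _ = Δ*K := e1
        _ ≤ p := hdm
  have hcp : c < (p:ℤ) := by
    have : ((2*Δ*S.card : ℕ) : ℤ) < (p:ℤ) := by exact_mod_cast hbound
    push_cast at this
    linarith
  have hinj : Set.InjOn (fun a : ℤ => ((a : ZMod p))) F := by
    intro a ha b hb hab
    have hdvd : (p:ℤ) ∣ a - b := by
      have h0 : ((a - b : ℤ) : ZMod p) = 0 := by
        push_cast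
        simp only at hab
        rw [hab]; ring
      exact (ZMod.intCast_zmod_eq_zero_iff_dvd _ _).mp h0
    have ha2 := hF2 a ha
    have hb2 := hF2 b hb
    have : a - b = 0 := Int.eq_zero_of_abs_lt_dvd hdvd (by
      rw [abs_sub_lt_iff]
      constructor <;> omega)
    omega
  have hcard2 : (F.image (fun a : ℤ => ((a : ZMod p)))).card = F.card :=
    Finset.card_image_of_injOn hinj
  have hsub : F.image (fun a : ℤ => ((a : ZMod p))) ⊆ T := by
    intro u hu
    obtain ⟨a, ha, rfl⟩ := Finset.mem_image.mp hu
    exact hF4 a ha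
  have hle := Finset.card_le_card hsub
  rw [hcard2, hF1, hTcard] at hle
  omega
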